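/- arXiv:cond-mat/0607749 — 2 statements merged into one kernel-verified Lean document; each statement's English description precedes it below -/
import Mathlib

section
/- If x ≠ y, then for every μ ∈ ℰ(A) and μ-a.e. w ∈ A^ℤ, lim_{n→∞} n/|G(w_1…w_n)| = 1/(1 − μ(xy)); i.e., the inverse mean shortening Z_{xy}^μ equals 1/(1 − μ(xy)). -/
open MeasureTheory Filter Topology

instance optionMeasurableSpace {A : Type*} [MeasurableSpace A] : MeasurableSpace (Option A) :=
  MeasurableSpace.comap (Option.elim' (Sum.inr ()) Sum.inl : Option A → A ⊕ Unit) inferInstance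

/-- Left-to-right non-overlapping substitution of the pair `x y` by a new symbol `none`. -/
def pairSubst {A : Type*} [DecidableEq A] (x y : A) : List A → List (Option A)
  | [] => []
  | [a] => [some a]
  | a :: b :: l =>
      if a = x ∧ b = y then none :: pairSubst x y l
      else some a :: pairSubst x y (b :: l)

/-- Substitution of every occurrence of `none` by the pair `x y`. -/
def pairExpand {A : Type*} (x y : A) : List (Option A) → List A
  | [] => []
  | none :: l => x :: y :: pairExpand x y l
  | some a :: l => a :: pairExpand x y l

/-- Number of (possibly overlapping) occurrences of `s` as a contiguous subword of `r`. -/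
def occ {B : Type*} [DecidableEq B] (s r : List B) : ℕ :=
  (List.range r.length).countP (fun i => decide (s <+: r.drop i))

/-- The word `w₁ … wₙ` read out of a two-sided sequence. -/
def wordOf {B : Type*} (w : ℤ → B) (n : ℕ) : List B :=
  (List.range n).map (fun i => w (i : ℤ))

/-- The cylinder set determined by a word. -/
def cyl {B : Type*} (s : List B) : Set (ℤ → B) :=
  {x | ∀ i : Fin s.length, x ((i : ℕ) : ℤ) = s.get i}

/-- The shift map on two-sided sequences. -/
def shift {B : Type*} : (ℤ → B) → (ℤ → B) := fun x i => x (i + 1)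

/-- The `n`-block entropy of a measure on `B^ℤ` (base-2 logarithms). -/
noncomputable def blockH {B : Type*} [Fintype B] [MeasurableSpace B]
    (μ : Measure (ℤ → B)) (n : ℕ) : ℝ :=
  -∑ z : Fin n → B,
    (μ {x : ℤ → B | ∀ i : Fin n, x ((i : ℕ) : ℤ) = z i}).toReal *
      Real.logb 2 ((μ {x : ℤ → B | ∀ i : Fin n, x ((i : ℕ) : ℤ) = z i}).toReal)

/-- `k`-Markov property (stated with cross-multiplied conditional probabilities). -/
def IsKMarkov {B : Type*} [MeasurableSpace B] (μ : Measure (ℤ → B)) (k : ℕ) : Prop :=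
  ∀ w : List B, k ≤ w.length → μ (cyl w) ≠ 0 → ∀ a : B,
    μ (cyl (w ++ [a])) * μ (cyl (w.drop (w.length - k))) =
      μ (cyl (w.drop (w.length - k) ++ [a])) * μ (cyl w)

set_option linter.unusedSectionVars false
set_option linter.unusedVariables false

namespace PairCnt

variable {A : Type*} [DecidableEq A]

/-- number of replaced pairs, mirroring `pairSubst`'s recursion. -/
def cnt (x y : A) : List A → ℕ
  | [] => 0
  | [_] => 0
  | a :: b :: l => if a = x ∧ b = y then 1 + cnt x y l else cnt x y (b :: l)

lemma pairSubst_length_add_cnt (x y : A) (l : List A) :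
    (pairSubst x y l).length + cnt x y l = l.length := by
  induction l using pairSubst.induct x y with
  | case1 => simp [pairSubst, cnt]
  | case2 a => simp [pairSubst, cnt]
  | case3 a b l h ih =>
      simp only [pairSubst, cnt, if_pos h, List.length_cons]
      omega
  | case4 a b l h ih =>
      simp only [pairSubst, cnt, if_neg h, List.length_cons] at *
      omega

lemma pairSubst_length_pos (x y : A) (l : List A) (hl : l ≠ []) :
    0 < (pairSubst x y l).length := by
  match l with
  | [] => simp at hl
  | [a] => simp [pairSubst]
  | a :: b :: l =>
      by_cases h : a = x ∧ b = y <;> simp [pairSubst, h]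

lemma two_mul_cnt_le (x y : A) (l : List A) : 2 * cnt x y l ≤ l.length := by
  induction l using pairSubst.induct x y with
  | case1 => simp [cnt]
  | case2 a => simp [cnt]
  | case3 a b l h ih => simp only [cnt, if_pos h, List.length_cons]; omega
  | case4 a b l h ih => simp only [cnt, if_neg h, List.length_cons] at *; omega

/-- positional count of occurrences of the pair `x y` in `w₀ w₁ … ` -/
def pcnt (x y : A) (w : ℤ → A) (n : ℕ) : ℕ :=
  ∑ i ∈ Finset.range n, if w (i : ℤ) = x ∧ w ((i : ℤ) + 1) = y then 1 else 0

lemma wordOf_eq {B : Type*} (w : ℤ → B) (n : ℕ) :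
    wordOf w n = (List.range n).map (fun i : ℕ => w ((i : ℕ) : ℤ)) := by
  simp only [wordOf, List.map_flatMap]
  induction (List.range n) with
  | nil => rfl
  | cons a l ih => simp_all [List.flatMap_cons]

lemma wordOf_succ {B : Type*} (w : ℤ → B) (n : ℕ) :
    wordOf w (n + 1) = w 0 :: wordOf (shift w) n := by
  rw [wordOf_eq, wordOf_eq]
  apply List.ext_getElem
  · simp
  · intro i h1 h2
    match i with
    | 0 => simp
    | (i + 1) =>
      have hc : ((i + 1 : ℕ) : ℤ) = (i : ℤ) + 1 := by push_cast; ring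
      simp [shift, hc]

lemma pcnt_succ (x y : A) (w : ℤ → A) (n : ℕ) :
    pcnt x y w (n + 1) =
      (if w 0 = x ∧ w 1 = y then 1 else 0) + pcnt x y (shift w) n := by
  have key : ∀ i : ℕ, (if w ((i + 1 : ℕ) : ℤ) = x ∧ w (((i + 1 : ℕ) : ℤ) + 1) = y then (1:ℕ) else 0)
      = (if (shift w) ((i : ℕ) : ℤ) = x ∧ (shift w) (((i : ℕ) : ℤ) + 1) = y then 1 else 0) := by
    intro i
    have hc : ((i + 1 : ℕ) : ℤ) = (i : ℤ) + 1 := by push_cast; ring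
    simp [shift, hc]
    exact if_congr Iff.rfl rfl rfl
  rw [pcnt, Finset.sum_range_succ']
  simp only [key]
  rw [add_comm]
  congr 1

lemma cnt_wordOf (x y : A) (hxy : x ≠ y) : ∀ n (w : ℤ → A),
    cnt x y (wordOf w n) = pcnt x y w (n - 1) := by
  intro n
  induction n using Nat.strong_induction_on with
  | _ n ih =>
    intro w
    match n with
    | 0 => simp [wordOf_eq, cnt, pcnt]
    | 1 => simp [wordOf_eq, cnt, pcnt, List.range_succ]
    | (n + 2) =>
      rw [wordOf_succ, wordOf_succ]
      have h10 : (shift w) 0 = w 1 := by simp [shift]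
      rw [h10]
      by_cases h : w 0 = x ∧ w 1 = y
      · rw [cnt, if_pos h]
        rw [ih n (by omega) (shift (shift w))]
        have key : ∀ m, pcnt x y w (m + 1) = 1 + pcnt x y (shift (shift w)) (m - 1) := by
          intro m
          match m with
          | 0 =>
            rw [show (0:ℕ) + 1 = 1 from rfl, pcnt, Finset.sum_range_one]
            simp [h, pcnt]
          | m + 1 =>
            rw [pcnt_succ, pcnt_succ, if_pos h]
            have h2 : ¬((shift w) 0 = x ∧ (shift w) 1 = y) := by
              rw [h10]; rintro ⟨hh, -⟩; exact hxy (hh.symm.trans h.2)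
            rw [if_neg h2]
            simp
        simpa using (key n).symm
      · rw [cnt, if_neg h]
        rw [← h10, ← wordOf_succ]
        rw [ih (n + 1) (by omega) (shift w)]
        have := pcnt_succ x y w n
        rw [if_neg h] at this
        simpa using this.symm

end PairCnt

section Birkhoff

variable {Ω : Type*} [MeasurableSpace Ω] {T : Ω → Ω} {μ : Measure Ω} {B : Set Ω}

noncomputable def birkS (T : Ω → Ω) (B : Set Ω) (n : ℕ) (w : Ω) : ℝ :=
  ∑ i ∈ Finset.range n, B.indicator (fun _ => (1 : ℝ)) (T^[i] w)

lemma indicator_mem_Icc (B : Set Ω) (v : Ω) :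
    B.indicator (fun _ => (1 : ℝ)) v ∈ Set.Icc (0:ℝ) 1 := by
  by_cases h : v ∈ B <;> simp [Set.indicator, h]

lemma birkS_nonneg (n : ℕ) (w : Ω) : 0 ≤ birkS T B n w :=
  Finset.sum_nonneg fun i _ => (indicator_mem_Icc B _).1

lemma birkS_le (n : ℕ) (w : Ω) : birkS T B n w ≤ n := by
  calc birkS T B n w ≤ ∑ _i ∈ Finset.range n, (1:ℝ) :=
        Finset.sum_le_sum fun i _ => (indicator_mem_Icc B _).2
    _ = n := by simp

lemma birkS_add (m n : ℕ) (w : Ω) :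
    birkS T B (m + n) w = birkS T B m w + birkS T B n (T^[m] w) := by
  simp only [birkS, Finset.sum_range_add]
  congr 1
  apply Finset.sum_congr rfl
  intro i _
  rw [add_comm m i, Function.iterate_add_apply]

lemma birkS_div_mem_Icc (n : ℕ) (w : Ω) : birkS T B n w / n ∈ Set.Icc (0:ℝ) 1 := by
  constructor
  · exact div_nonneg (birkS_nonneg n w) (Nat.cast_nonneg n)
  · rcases Nat.eq_zero_or_pos n with h | h
    · simp [h]
    · rw [div_le_one (by positivity)]
      exact birkS_le n w

lemma measurable_birkS (hT : Measurable T) (hB : MeasurableSet B) (n : ℕ) :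
    Measurable (birkS T B n) :=
  Finset.measurable_sum _ fun i _ =>
    (measurable_const.indicator hB).comp (hT.iterate i)

lemma integrable_ind_comp [IsFiniteMeasure μ] (hT : MeasurePreserving T μ μ)
    (hB : MeasurableSet B) (i : ℕ) :
    Integrable (fun w => B.indicator (fun _ => (1:ℝ)) (T^[i] w)) μ := by
  have hmap : Measure.map (T^[i]) μ = μ := (hT.iterate i).map_eq
  have hind : Integrable (B.indicator (fun _ => (1:ℝ))) μ :=
    (integrable_const (1:ℝ)).indicator hB
  exact (integrable_map_measure (hmap ▸ hind.aestronglyMeasurable)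
    ((hT.measurable.iterate i).aemeasurable)).mp (by rwa [hmap])

lemma integrable_birkS [IsFiniteMeasure μ] (hT : MeasurePreserving T μ μ)
    (hB : MeasurableSet B) (n : ℕ) : Integrable (birkS T B n) μ :=
  integrable_finset_sum _ fun i _ => integrable_ind_comp hT hB i

lemma integral_birkS [IsProbabilityMeasure μ] (hT : MeasurePreserving T μ μ)
    (hB : MeasurableSet B) (n : ℕ) :
    ∫ w, birkS T B n w ∂μ = n * (μ B).toReal := by
  have h1 : ∀ i : ℕ, ∫ w, B.indicator (fun _ => (1:ℝ)) (T^[i] w) ∂μ = (μ B).toReal := by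
    intro i
    have hmap : Measure.map (T^[i]) μ = μ := (hT.iterate i).map_eq
    have h := integral_map (f := fun v => B.indicator (fun _ => (1:ℝ)) v)
      ((hT.measurable.iterate i).aemeasurable)
      (by rw [hmap]; exact ((measurable_const.indicator hB)).aestronglyMeasurable)
    rw [hmap] at h
    rw [← h]
    exact integral_indicator_one hB
  simp only [birkS]
  rw [integral_finset_sum _ (fun i _ => integrable_ind_comp hT hB i)]
  simp [h1, mul_comm]

end Birkhoff

section Birkhoff2

variable {Ω : Type*} [MeasurableSpace Ω] {T : Ω → Ω} {μ : Measure Ω} {B : Set Ω}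

lemma le_add_eps {a b : ℝ} (h : ∀ ε : ℝ, 0 < ε → a ≤ b + ε) : a ≤ b := by
  by_contra hc
  push_neg at hc
  have := h ((a - b) / 2) (by linarith)
  linarith

noncomputable def birkU (T : Ω → Ω) (B : Set Ω) (w : Ω) : ℝ :=
  limsup (fun n : ℕ => birkS T B n w / n) atTop

lemma bddAbove_birk (w : Ω) :
    IsBoundedUnder (· ≤ ·) atTop (fun n : ℕ => birkS T B n w / n) :=
  isBoundedUnder_of ⟨1, fun n => (birkS_div_mem_Icc n w).2⟩

lemma bddBelow_birk (w : Ω) :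
    IsBoundedUnder (· ≥ ·) atTop (fun n : ℕ => birkS T B n w / n) :=
  isBoundedUnder_of ⟨0, fun n => (birkS_div_mem_Icc n w).1⟩

lemma birkU_mem_Icc (w : Ω) : birkU T B w ∈ Set.Icc (0:ℝ) 1 :=
  ⟨le_limsup_of_frequently_le
      (Frequently.of_forall fun n => (birkS_div_mem_Icc n w).1) (bddAbove_birk w),
    limsup_le_of_le ((bddBelow_birk w).isCoboundedUnder_le)
      (Eventually.of_forall fun n => (birkS_div_mem_Icc n w).2)⟩

lemma measurable_birkU (hT : Measurable T) (hB : MeasurableSet B) :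
    Measurable (birkU T B) :=
  Measurable.limsup fun n => (measurable_birkS hT hB n).div_const _

lemma bddA_of_Icc {u : ℕ → ℝ} (hu : ∀ n, u n ∈ Set.Icc (0:ℝ) 1) :
    IsBoundedUnder (· ≤ ·) atTop u :=
  isBoundedUnder_of ⟨1, fun n => (hu n).2⟩

lemma bddB_of_Icc {u : ℕ → ℝ} (hu : ∀ n, u n ∈ Set.Icc (0:ℝ) 1) :
    IsBoundedUnder (· ≥ ·) atTop u :=
  isBoundedUnder_of ⟨0, fun n => (hu n).1⟩

/-- `limsup u ≤ limsup v + ε` when eventually `u n ≤ v n + ε`, for `[0,1]`-valued sequences. -/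
lemma limsup_le_limsup_add_eps {u v : ℕ → ℝ} (hu : ∀ n, u n ∈ Set.Icc (0:ℝ) 1)
    (hv : ∀ n, v n ∈ Set.Icc (0:ℝ) 1) {ε : ℝ} (hε : 0 < ε)
    (h : ∀ᶠ n in atTop, u n ≤ v n + ε) :
    limsup u atTop ≤ limsup v atTop + ε := by
  calc limsup u atTop ≤ limsup (fun n => v n + ε) atTop :=
        limsup_le_limsup h
          ((bddB_of_Icc hu).isCoboundedUnder_le)
          (isBoundedUnder_of ⟨1 + ε, fun n => by linarith [(hv n).2]⟩)
    _ = limsup v atTop + ε :=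
        limsup_add_const atTop v ε (bddA_of_Icc hv)
          ((bddB_of_Icc hv).isCoboundedUnder_le)

lemma birkS_succ_eq (n : ℕ) (w : Ω) :
    birkS T B (n + 1) w = B.indicator (fun _ => (1:ℝ)) w + birkS T B n (T w) := by
  have h := birkS_add (T := T) (B := B) 1 n w
  rw [add_comm 1 n] at h
  simpa [birkS, Finset.sum_range_one] using h

lemma birkU_comp (w : Ω) : birkU T B (T w) = birkU T B w := by
  set f := B.indicator (fun _ => (1:ℝ)) with hf
  set a : ℕ → ℝ := fun n => birkS T B n (T w) / n with ha
  set b : ℕ → ℝ := fun n => birkS T B n w / n with hb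
  have hIa : ∀ n, a n ∈ Set.Icc (0:ℝ) 1 := fun n => birkS_div_mem_Icc n (T w)
  have hIb : ∀ n, b n ∈ Set.Icc (0:ℝ) 1 := fun n => birkS_div_mem_Icc n w
  have hsucc : ∀ n : ℕ, birkS T B (n + 1) w = f w + birkS T B n (T w) :=
    fun n => birkS_succ_eq n w
  have hf0 : 0 ≤ f w := (indicator_mem_Icc B w).1
  have hf1 : f w ≤ 1 := (indicator_mem_Icc B w).2
  have key : ∀ n : ℕ, 1 ≤ n →
      a n ≤ b (n + 1) + 1 / n ∧ b (n + 1) ≤ a n + 1 / n := by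
    intro n hn
    have hn0 : (0:ℝ) < n := by exact_mod_cast hn
    have hn1 : (0:ℝ) < (n:ℝ) + 1 := by linarith
    have hS0 : 0 ≤ birkS T B n (T w) := birkS_nonneg n (T w)
    have hS1 : birkS T B n (T w) ≤ n := birkS_le n (T w)
    have e1 : b (n + 1) = (f w + birkS T B n (T w)) / ((n:ℝ) + 1) := by
      simp only [hb, hsucc n]
      push_cast
      ring_nf
    constructor
    · simp only [ha, e1]
      rw [div_add_div _ _ (ne_of_gt hn1) (ne_of_gt hn0), div_le_div_iff₀ hn0 (by positivity)]
      nlinarith [mul_le_mul_of_nonneg_right hS1 (le_of_lt hn0), mul_pos hn0 hn0]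
    · simp only [ha, e1]
      rw [div_add_div _ _ (ne_of_gt hn0) (ne_of_gt hn0), div_le_div_iff₀ hn1 (by positivity)]
      nlinarith [mul_le_mul_of_nonneg_right hf1 (le_of_lt (mul_pos hn0 hn0)), mul_pos hn0 hn0]
  have h1 : limsup a atTop ≤ limsup b atTop := by
    apply le_add_eps
    intro ε hε
    have hev : ∀ᶠ n in atTop, a n ≤ (fun n => b (n + 1)) n + ε := by
      filter_upwards [eventually_ge_atTop 1,
        tendsto_one_div_atTop_nhds_zero_nat.eventually (gt_mem_nhds hε)] with n hn hn2
      exact le_trans ((key n hn).1) (by linarith)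
    have := limsup_le_limsup_add_eps hIa (fun n => hIb (n + 1)) hε hev
    rwa [limsup_nat_add b 1] at this
  have h2 : limsup b atTop ≤ limsup a atTop := by
    apply le_add_eps
    intro ε hε
    have hev : ∀ᶠ n in atTop, (fun n => b (n + 1)) n ≤ a n + ε := by
      filter_upwards [eventually_ge_atTop 1,
        tendsto_one_div_atTop_nhds_zero_nat.eventually (gt_mem_nhds hε)] with n hn hn2
      exact le_trans ((key n hn).2) (by linarith)
    have := limsup_le_limsup_add_eps (fun n => hIb (n + 1)) hIa hε hev
    rwa [limsup_nat_add b 1] at this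
  exact le_antisymm h1 h2

end Birkhoff2

section Birkhoff3

variable {Ω : Type*} [MeasurableSpace Ω] {T : Ω → Ω} {μ : Measure Ω} {B : Set Ω}

lemma birk_limsup_le [IsProbabilityMeasure μ] (hT : Ergodic T μ) (hB : MeasurableSet B) :
    ∀ᵐ w ∂μ, birkU T B w ≤ (μ B).toReal := by
  obtain ⟨a, hconst⟩ : ∃ c, birkU T B =ᵐ[μ] Function.const Ω c :=
    hT.toPreErgodic.ae_eq_const_of_ae_eq_comp (measurable_birkU hT.measurable hB)
      (funext fun w => birkU_comp w)
  have hane : (ae μ).NeBot := ae_neBot.2 (IsProbabilityMeasure.ne_zero μ)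
  obtain ⟨w₀, hw₀⟩ := hconst.exists
  have haI : a ∈ Set.Icc (0:ℝ) 1 := by
    rw [Function.const_apply] at hw₀
    exact hw₀ ▸ birkU_mem_Icc w₀
  set c := (μ B).toReal with hc
  have hc0 : 0 ≤ c := ENNReal.toReal_nonneg
  suffices h : a ≤ c by
    filter_upwards [hconst] with w hw
    rw [hw, Function.const_apply]
    exact h
  have key : ∀ ε : ℝ, 0 < ε → a ≤ c + 2 * ε := by
    intro ε hε
    by_cases haε : a - ε ≤ 0
    · linarith
    push_neg at haε
    set S := birkS T B with hS
    set P : ℕ → Ω → Prop := fun N w => ∃ n, 1 ≤ n ∧ n ≤ N ∧ (n:ℝ) * (a - ε) ≤ S n w with hP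
    set E : ℕ → Set Ω := fun N => {w | ¬ P N w} with hE
    have hPm : ∀ N, MeasurableSet {w | P N w} := by
      intro N
      have hrw : {w | P N w} =
          ⋃ n, ⋃ (_ : 1 ≤ n ∧ n ≤ N), {w | (n:ℝ) * (a - ε) ≤ S n w} := by
        ext w
        simp only [hP, Set.mem_setOf_eq, Set.mem_iUnion, exists_prop]
        constructor
        · rintro ⟨n, h1, h2, h3⟩; exact ⟨n, ⟨h1, h2⟩, h3⟩
        · rintro ⟨n, ⟨h1, h2⟩, h3⟩; exact ⟨n, h1, h2, h3⟩
      rw [hrw]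
      exact MeasurableSet.iUnion fun n => MeasurableSet.iUnion fun _ =>
        measurableSet_le measurable_const (measurable_birkS hT.measurable hB n)
    have hEm : ∀ N, MeasurableSet (E N) := fun N => (hPm N).compl
    have hE_anti : Antitone E := by
      intro N M hNM w hw hPN
      obtain ⟨n, h1, h2, h3⟩ := hPN
      exact hw ⟨n, h1, le_trans h2 hNM, h3⟩
    have hInull : μ (⋂ N, E N) = 0 := by
      rw [measure_eq_zero_iff_ae_notMem]
      filter_upwards [hconst] with w hw hmem
      have hall : ∀ n : ℕ, 1 ≤ n → S n w < (n:ℝ) * (a - ε) := by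
        intro n hn
        by_contra hcon
        push_neg at hcon
        exact (Set.mem_iInter.mp hmem n) ⟨n, hn, le_refl n, hcon⟩
      have hub : birkU T B w ≤ a - ε := by
        apply limsup_le_of_le ((bddBelow_birk w).isCoboundedUnder_le)
        filter_upwards [eventually_ge_atTop 1] with n hn
        have hn0 : (0:ℝ) < n := by exact_mod_cast hn
        rw [div_le_iff₀ hn0]
        have := hall n hn
        linarith [mul_comm (n:ℝ) (a - ε)]
      rw [hw, Function.const_apply] at hub
      linarith
    have htend : Tendsto (fun N => μ (E N)) atTop (𝓝 0) := by
      have h := tendsto_measure_iInter_atTop (μ := μ)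
        (fun N => (hEm N).nullMeasurableSet) hE_anti ⟨0, measure_ne_top μ _⟩
      rw [hInull] at h
      exact h
    obtain ⟨N, hN1, hNε⟩ : ∃ N : ℕ, 1 ≤ N ∧ (μ (E N)).toReal < ε := by
      have hev := htend.eventually (gt_mem_nhds (ENNReal.ofReal_pos.2 hε))
      obtain ⟨N, hN1, hN2⟩ := ((eventually_ge_atTop 1).and hev).exists
      exact ⟨N, hN1, ENNReal.toReal_lt_of_lt_ofReal hN2⟩
    set ε' := (μ (E N)).toReal with hε'
    have hε'0 : 0 ≤ ε' := ENNReal.toReal_nonneg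
    set SS : ℕ → Ω → ℝ := fun n w => S n w + birkS T (E N) n w with hSS
    have hQ : ∀ w : Ω, ∃ m : ℕ, 1 ≤ m ∧ m ≤ N ∧ (m:ℝ) * (a - ε) ≤ SS m w := by
      intro w
      by_cases hPw : P N w
      · obtain ⟨n, h1, h2, h3⟩ := hPw
        exact ⟨n, h1, h2, le_trans h3 (le_add_of_nonneg_right (birkS_nonneg n w))⟩
      · refine ⟨1, le_refl 1, hN1, ?_⟩
        have hwE : w ∈ E N := hPw
        have hE1 : birkS T (E N) 1 w = 1 := by
          simp [birkS, Set.indicator_of_mem hwE]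
        have hS10 : 0 ≤ S 1 w := birkS_nonneg 1 w
        simp only [hSS, hE1]
        push_cast
        nlinarith [haI.2]
    choose nn hnn1 hnnN hnnQ using hQ
    have hkey : ∀ L : ℕ, ∀ w : Ω, (L:ℝ) * (a - ε) - (N:ℝ) * (a - ε) ≤ SS L w := by
      intro L
      induction L using Nat.strong_induction_on with
      | _ L ih =>
        intro w
        by_cases hL : L ≤ N
        · have h1 : (L:ℝ) * (a - ε) ≤ (N:ℝ) * (a - ε) := by
            apply mul_le_mul_of_nonneg_right _ (le_of_lt haε)
            exact_mod_cast hL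
          have h2 : 0 ≤ SS L w := add_nonneg (birkS_nonneg _ _) (birkS_nonneg _ _)
          linarith
        · push_neg at hL
          have hm1 : 1 ≤ nn w := hnn1 w
          have hmN : nn w ≤ N := hnnN w
          have hmL : nn w < L := lt_of_le_of_lt hmN hL
          have hLm : nn w + (L - nn w) = L := by omega
          have hsplit : SS L w = SS (nn w) w + SS (L - nn w) (T^[nn w] w) := by
            simp only [hSS, hS]
            rw [← hLm, birkS_add, birkS_add]
            ring_nf
            rw [hLm]
            ring
          have hIH := ih (L - nn w) (by omega) (T^[nn w] w)
          have hQm := hnnQ w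
          have hcast : ((L - nn w : ℕ):ℝ) = (L:ℝ) - (nn w : ℝ) := by
            have hle : nn w ≤ L := le_of_lt hmL
            push_cast [hle]
            ring
          rw [hsplit]
          rw [hcast] at hIH
          nlinarith
    have hint : ∀ L : ℕ, (L:ℝ) * (a - ε) - (N:ℝ) * (a - ε) ≤ (L:ℝ) * (c + ε') := by
      intro L
      have hi1 : Integrable (fun w => S L w) μ :=
        integrable_birkS hT.toMeasurePreserving hB L
      have hi2 : Integrable (fun w => birkS T (E N) L w) μ :=
        integrable_birkS hT.toMeasurePreserving (hEm N) L
      have hSSint : Integrable (fun w => SS L w) μ := hi1.add hi2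
      have h2 : ∫ w, SS L w ∂μ = (L:ℝ) * c + (L:ℝ) * ε' := by
        simp only [hSS]
        rw [integral_add hi1 hi2, integral_birkS hT.toMeasurePreserving hB,
          integral_birkS hT.toMeasurePreserving (hEm N)]
      calc (L:ℝ) * (a - ε) - (N:ℝ) * (a - ε)
          = ∫ _w, ((L:ℝ) * (a - ε) - (N:ℝ) * (a - ε)) ∂μ := by
            rw [integral_const]; simp
        _ ≤ ∫ w, SS L w ∂μ :=
            integral_mono (integrable_const _) hSSint (fun w => hkey L w)
        _ = (L:ℝ) * c + (L:ℝ) * ε' := h2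
        _ = (L:ℝ) * (c + ε') := by ring
    have hdiv : ∀ L : ℕ, 1 ≤ L → a - ε - (c + ε') ≤ (N:ℝ) * (a - ε) / L := by
      intro L hL
      have hL0 : (0:ℝ) < L := by exact_mod_cast hL
      rw [le_div_iff₀ hL0]
      have := hint L
      nlinarith
    have htend0 : Tendsto (fun L : ℕ => (N:ℝ) * (a - ε) / L) atTop (𝓝 0) :=
      tendsto_const_div_atTop_nhds_zero_nat _
    have hfin : a - ε - (c + ε') ≤ 0 :=
      ge_of_tendsto htend0
        (by filter_upwards [eventually_ge_atTop 1] with L hL using hdiv L hL)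
    linarith
  exact le_add_eps fun ε hε => by
    have := key (ε / 2) (by linarith)
    linarith

end Birkhoff3

section Birkhoff4

variable {Ω : Type*} [MeasurableSpace Ω] {T : Ω → Ω} {μ : Measure Ω} {B : Set Ω}

lemma birkS_compl (n : ℕ) (w : Ω) :
    birkS T Bᶜ n w = n - birkS T B n w := by
  have hpt : ∀ v : Ω, Bᶜ.indicator (fun _ => (1:ℝ)) v
      = 1 - B.indicator (fun _ => (1:ℝ)) v := by
    intro v
    by_cases h : v ∈ B <;> simp [Set.indicator, h]
  simp only [birkS, hpt, Finset.sum_sub_distrib, Finset.sum_const,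
    Finset.card_range, nsmul_eq_mul, mul_one]

/-- Birkhoff's pointwise ergodic theorem for indicators of measurable sets. -/
lemma birk_tendsto_ae [IsProbabilityMeasure μ] (hT : Ergodic T μ) (hB : MeasurableSet B) :
    ∀ᵐ w ∂μ, Tendsto (fun n : ℕ => birkS T B n w / n) atTop (𝓝 (μ B).toReal) := by
  have h1 := birk_limsup_le hT hB
  have h2 := birk_limsup_le hT hB.compl
  have hcompl : (μ Bᶜ).toReal = 1 - (μ B).toReal := by
    rw [measure_compl hB (measure_ne_top μ B), measure_univ,
      ENNReal.toReal_sub_of_le prob_le_one ENNReal.one_ne_top]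
    simp
  filter_upwards [h1, h2] with w hw1 hw2
  set u : ℕ → ℝ := fun n => birkS T B n w / n with hu
  have hI : ∀ n, u n ∈ Set.Icc (0:ℝ) 1 := fun n => birkS_div_mem_Icc n w
  have hseq : ∀ᶠ n in atTop, birkS T Bᶜ n w / n = 1 - u n := by
    filter_upwards [eventually_ge_atTop 1] with n hn
    have hn0 : (0:ℝ) < n := by exact_mod_cast hn
    rw [birkS_compl, sub_div, div_self (ne_of_gt hn0)]
  have hls : limsup (fun n : ℕ => birkS T Bᶜ n w / n) atTop
      = limsup (fun n => 1 - u n) atTop := limsup_congr hseq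
  have hmap : (1:ℝ) - liminf u atTop = limsup (fun n => 1 - u n) atTop := by
    have hanti : Antitone (fun x : ℝ => 1 - x) := fun p q hpq => by dsimp; linarith
    have := hanti.map_liminf_of_continuousAt (F := atTop) u
      ((continuous_const.sub continuous_id).continuousAt)
      ((bddA_of_Icc hI).isCoboundedUnder_ge) (bddB_of_Icc hI)
    exact this
  have hliminf : (μ B).toReal ≤ liminf u atTop := by
    have hx : limsup (fun n : ℕ => birkS T Bᶜ n w / n) atTop ≤ (μ Bᶜ).toReal := hw2
    rw [hls, ← hmap, hcompl] at hx
    linarith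
  have hlimsup : limsup u atTop ≤ (μ B).toReal := hw1
  have hle : liminf u atTop ≤ limsup u atTop :=
    liminf_le_limsup (bddA_of_Icc hI) (bddB_of_Icc hI)
  exact tendsto_of_liminf_eq_limsup
    (le_antisymm (by linarith) hliminf) (le_antisymm hlimsup (by linarith))
    (bddA_of_Icc hI) (bddB_of_Icc hI)

end Birkhoff4

section Assembly

variable {A : Type*} [MeasurableSpace A] [MeasurableSingletonClass A]

lemma measurable_shift : Measurable (shift : (ℤ → A) → (ℤ → A)) :=
  measurable_pi_lambda _ fun i => measurable_pi_apply (i + 1)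

lemma measurableSet_cyl (s : List A) : MeasurableSet (cyl s) := by
  have hrw : cyl s = ⋂ i : Fin s.length,
      (fun v : ℤ → A => v ((i : ℕ) : ℤ)) ⁻¹' {s.get i} := by
    ext v
    simp [cyl, Set.mem_iInter]
  rw [hrw]
  exact MeasurableSet.iInter fun i =>
    (measurable_pi_apply _) (measurableSet_singleton _)

lemma shift_iterate (i : ℕ) : ∀ (w : ℤ → A) (j : ℤ), (shift^[i] w) j = w (j + i) := by
  induction i with
  | zero => intro w j; simp
  | succ i ih =>
      intro w j
      rw [Function.iterate_succ_apply, ih (shift w) j]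
      simp only [shift]
      congr 1
      push_cast
      ring

lemma mem_cyl_pair (x y : A) (v : ℤ → A) : v ∈ cyl [x, y] ↔ v 0 = x ∧ v 1 = y := by
  constructor
  · intro h
    refine ⟨?_, ?_⟩
    · have := h ⟨0, by norm_num⟩
      simpa using this
    · have := h ⟨1, by norm_num⟩
      simpa using this
  · rintro ⟨h0, h1⟩ i
    fin_cases i
    · simpa using h0
    · simpa using h1

lemma birkS_eq_pcnt [DecidableEq A] (x y : A) (w : ℤ → A) (n : ℕ) :
    birkS shift (cyl [x, y]) n w = (PairCnt.pcnt x y w n : ℝ) := by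
  rw [birkS, PairCnt.pcnt]
  push_cast
  apply Finset.sum_congr rfl
  intro i _
  have h0 : (shift^[i] w) 0 = w (i : ℤ) := by rw [shift_iterate]; norm_num
  have h1 : (shift^[i] w) 1 = w ((i : ℤ) + 1) := by rw [shift_iterate]; ring_nf
  have hmem : shift^[i] w ∈ cyl [x, y] ↔ (w (i : ℤ) = x ∧ w ((i : ℤ) + 1) = y) := by
    rw [mem_cyl_pair, h0, h1]
  by_cases h : w (i : ℤ) = x ∧ w ((i : ℤ) + 1) = y
  · rw [Set.indicator_of_mem (hmem.mpr h)]
    simp [h]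
  · rw [Set.indicator_of_notMem (fun hh => h (hmem.mp hh))]
    simp [h]

end Assembly

/-- for `x ≠ y`, the inverse mean shortening `Z_{xy}^μ` equals `1/(1 − μ(xy))`:
`μ`-a.e. `n/|G(w₁…wₙ)| → 1/(1 − μ(xy))`. -/
theorem stmt_4 {A : Type*} [Fintype A] [DecidableEq A] [MeasurableSpace A]
    [MeasurableSingletonClass A]
    (x y : A) (hxy : x ≠ y)
    (μ : Measure (ℤ → A)) [IsProbabilityMeasure μ] (hμ : Ergodic shift μ) :
    ∀ᵐ w ∂μ, Tendsto
      (fun n : ℕ => (n : ℝ) / ((pairSubst x y (wordOf w n)).length : ℝ))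
      atTop (𝓝 (1 / (1 - (μ (cyl [x, y])).toReal))) := by
  classical
  have hB : MeasurableSet (cyl [x, y] : Set (ℤ → A)) := measurableSet_cyl [x, y]
  set B : Set (ℤ → A) := cyl [x, y] with hBdef
  set c : ℝ := (μ B).toReal with hcdef
  have hc0 : 0 ≤ c := ENNReal.toReal_nonneg
  -- μ B < 1
  have hBne : μ B ≠ 1 := by
    intro h1
    have hBc : μ Bᶜ = 0 := (prob_compl_eq_zero_iff hB).mpr h1
    have hpre : μ (shift ⁻¹' B) = 1 := by
      rw [hμ.toMeasurePreserving.measure_preimage hB.nullMeasurableSet]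
      exact h1
    have hTc : μ (shift ⁻¹' B)ᶜ = 0 :=
      (prob_compl_eq_zero_iff (hB.preimage measurable_shift)).mpr hpre
    have hempty : B ∩ shift ⁻¹' B = (∅ : Set (ℤ → A)) := by
      ext v
      simp only [Set.mem_inter_iff, Set.mem_preimage, Set.mem_empty_iff_false, iff_false,
        hBdef, mem_cyl_pair]
      rintro ⟨⟨hv0, hv1⟩, hs0, hs1⟩
      have : v 1 = x := by simpa [shift] using hs0
      exact hxy (this ▸ hv1 ▸ rfl : x = y)
    have huniv : (Set.univ : Set (ℤ → A)) = Bᶜ ∪ (shift ⁻¹' B)ᶜ := by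
      rw [← Set.compl_inter, hempty, Set.compl_empty]
    have hle : μ Set.univ ≤ μ Bᶜ + μ (shift ⁻¹' B)ᶜ := by
      rw [huniv]
      exact measure_union_le _ _
    rw [measure_univ, hBc, hTc] at hle
    simp at hle
  have hc1 : c < 1 := by
    have hlt : μ B < 1 := lt_of_le_of_ne prob_le_one hBne
    have := ENNReal.toReal_lt_toReal (measure_ne_top μ B) ENNReal.one_ne_top
    rw [ENNReal.toReal_one] at this
    exact this.mpr hlt
  have hmain := birk_tendsto_ae hμ hB
  filter_upwards [hmain] with w hw
  -- hw : Tendsto (fun n => birkS shift B n w / n) atTop (𝓝 c)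
  have hshift : Tendsto (fun n : ℕ => birkS shift B (n - 1) w / ((n - 1 : ℕ) : ℝ))
      atTop (𝓝 c) := hw.comp (tendsto_sub_atTop_nat 1)
  have hratio : Tendsto (fun n : ℕ => ((n - 1 : ℕ) : ℝ) / (n : ℝ)) atTop (𝓝 1) := by
    have h1 : Tendsto (fun n : ℕ => 1 - 1 / (n : ℝ)) atTop (𝓝 (1 - 0)) :=
      tendsto_const_nhds.sub tendsto_one_div_atTop_nhds_zero_nat
    rw [sub_zero] at h1
    apply h1.congr'
    filter_upwards [eventually_ge_atTop 1] with n hn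
    have hn0 : (0 : ℝ) < n := by exact_mod_cast hn
    have hcast : ((n - 1 : ℕ) : ℝ) = (n : ℝ) - 1 := by
      push_cast [hn]
      ring
    rw [hcast]
    field_simp
  have hA : Tendsto (fun n : ℕ => birkS shift B (n - 1) w / (n : ℝ)) atTop (𝓝 c) := by
    have hprod := hshift.mul hratio
    rw [mul_one] at hprod
    apply hprod.congr'
    filter_upwards [eventually_ge_atTop 2] with n hn
    have h1 : ((n - 1 : ℕ) : ℝ) ≠ 0 := by
      have : 1 ≤ n - 1 := by omega
      have : (0 : ℝ) < ((n - 1 : ℕ) : ℝ) := by exact_mod_cast this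
      exact ne_of_gt this
    have hn0 : ((n : ℕ) : ℝ) ≠ 0 := by
      have : (0:ℝ) < n := by exact_mod_cast (by omega : 0 < n)
      exact ne_of_gt this
    have hn1 : ((n : ℝ) - 1) ≠ 0 := by
      have : (2:ℝ) ≤ n := by exact_mod_cast hn
      intro hc
      linarith
    field_simp
  have hlen : ∀ n : ℕ, ((pairSubst x y (wordOf w n)).length : ℝ)
      = (n : ℝ) - birkS shift B (n - 1) w := by
    intro n
    have h1 := PairCnt.pairSubst_length_add_cnt x y (wordOf w n)
    have h2 : (wordOf w n).length = n := by simp [PairCnt.wordOf_eq]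
    have h3 := PairCnt.cnt_wordOf x y hxy n w
    have h4 : birkS shift B (n - 1) w = (PairCnt.pcnt x y w (n - 1) : ℝ) :=
      birkS_eq_pcnt x y w (n - 1)
    rw [h2, h3] at h1
    have h5 : ((pairSubst x y (wordOf w n)).length : ℝ)
        + (PairCnt.pcnt x y w (n - 1) : ℝ) = (n : ℝ) := by exact_mod_cast h1
    rw [h4]
    linarith
  have hC : Tendsto (fun n : ℕ => ((pairSubst x y (wordOf w n)).length : ℝ) / (n : ℝ))
      atTop (𝓝 (1 - c)) := by
    have h1 : Tendsto (fun n : ℕ => 1 - birkS shift B (n - 1) w / (n : ℝ))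
        atTop (𝓝 (1 - c)) := tendsto_const_nhds.sub hA
    apply h1.congr'
    filter_upwards [eventually_ge_atTop 1] with n hn
    have hn0 : (0 : ℝ) < n := by exact_mod_cast hn
    rw [hlen n, sub_div, div_self (ne_of_gt hn0)]
  have hne : (1 : ℝ) - c ≠ 0 := by linarith
  have hD := hC.inv₀ hne
  have hfun : (fun n : ℕ => (((pairSubst x y (wordOf w n)).length : ℝ) / (n : ℝ))⁻¹)
      = fun n : ℕ => (n : ℝ) / ((pairSubst x y (wordOf w n)).length : ℝ) :=
    funext fun n => inv_div _ _
  rw [hfun] at hD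
  rw [one_div]
  exact hD
end

section
/- For every ν ∈ ℰ(A') and ν-a.e. z ∈ A'^ℤ, the mean lengthening W_α^ν := lim_{n→∞} |S(z_1…z_n)|/n exists and equals 1 + ν(α); moreover, for every μ ∈ ℰ(A), W_α^{𝒢μ} = Z_{xy}^μ, i.e., 1 + 𝒢μ(α) equals the inverse mean shortening of μ under G. -/
open MeasureTheory Filter Topology

set_option linter.unusedSectionVars false
set_option maxHeartbeats 1000000
open scoped ENNReal NNReal

lemma count_beq_eq {B : Type*} {i1 i2 : BEq B} [@LawfulBEq B i1] [@LawfulBEq B i2] (a : B) (l : List B) :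
    @List.count B i1 a l = @List.count B i2 a l := by
  induction l with
  | nil => rfl
  | cons hd tl ih =>
      rw [@List.count_cons B i1, @List.count_cons B i2, ih]
      congr 1
      by_cases h : hd = a
      · rw [h, @beq_self_eq_true B i1, @beq_self_eq_true B i2]
      · have e1 : @BEq.beq B i1 hd a = false := by
          cases hb : @BEq.beq B i1 hd a
          · rfl
          · exact absurd (eq_of_beq hb) h
        have e2 : @BEq.beq B i2 hd a = false := by
          cases hb : @BEq.beq B i2 hd a
          · rfl
          · exact absurd (eq_of_beq hb) h
        rw [e1, e2]

lemma occ_singleton {B : Type*} [DecidableEq B] (b : B) (r : List B) :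
    occ [b] r = r.count b := by
  induction r with
  | nil => rfl
  | cons hd tl ih =>
      unfold occ at *
      simp only [List.length_cons, List.range_succ_eq_map, List.countP_cons, List.countP_map,
        List.drop_succ_cons, List.drop_zero, List.count_cons, Function.comp_def] at *
      rw [ih]
      congr 1
      by_cases h : hd = b
      · simp [h, List.cons_prefix_cons]
      · simp only [beq_iff_eq, if_neg h, decide_eq_true_eq, List.cons_prefix_cons]
        rw [if_neg]
        exact fun hc => h hc.1.symm

lemma pairExpand_length {A : Type*} (x y : A) [DecidableEq A] (l : List (Option A)) :
    (pairExpand x y l).length = l.length + l.count none := by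
  induction l with
  | nil => rfl
  | cons hd tl ih => cases hd <;> simp [pairExpand, ih, List.count_cons] <;> ring

lemma pairSubst_length {A : Type*} [DecidableEq A] (x y : A) (l : List A) :
    (pairSubst x y l).length + (pairSubst x y l).count none = l.length := by
  induction l using pairSubst.induct x y with
  | case1 => rfl
  | case2 a => rfl
  | case3 a b l h ih => simp [pairSubst, h, List.count_cons]; omega
  | case4 a b l h ih => simp [pairSubst, h, List.count_cons] at *; omega

lemma pairSubst_ne_nil {A : Type*} [DecidableEq A] (x y : A) (l : List A) (h : l ≠ []) :
    pairSubst x y l ≠ [] := by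
  match l with
  | [] => exact absurd rfl h
  | [a] => simp [pairSubst]
  | a :: b :: l => unfold pairSubst; split <;> simp


section Birkhoff
variable {X : Type*} [MeasurableSpace X] {T : X → X} {μ : Measure X} {S : Set X}
variable {X : Type*} [MeasurableSpace X] {T : X → X} {μ : Measure X} {S : Set X}

noncomputable def birkA (T : X → X) (S : Set X) (n : ℕ) (x : X) : ℝ :=
  (∑ i ∈ Finset.range n, S.indicator (fun _ => (1:ℝ)) (T^[i] x)) / n

lemma indicator_mem (S : Set X) (z : X) : S.indicator (fun _ => (1:ℝ)) z ∈ Set.Icc (0:ℝ) 1 := by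
  by_cases h : z ∈ S <;> simp [Set.indicator_apply, h]

lemma birkA_mem (T : X → X) (S : Set X) (n : ℕ) (x : X) :
    birkA T S n x ∈ Set.Icc (0:ℝ) 1 := by
  have h0 : (0:ℝ) ≤ ∑ i ∈ Finset.range n, S.indicator (fun _ => (1:ℝ)) (T^[i] x) :=
    Finset.sum_nonneg fun i _ => (indicator_mem S _).1
  have h1 : ∑ i ∈ Finset.range n, S.indicator (fun _ => (1:ℝ)) (T^[i] x) ≤ n := by
    calc ∑ i ∈ Finset.range n, S.indicator (fun _ => (1:ℝ)) (T^[i] x)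
        ≤ ∑ i ∈ Finset.range n, 1 := Finset.sum_le_sum fun i _ => (indicator_mem S _).2
      _ = n := by simp
  constructor
  · exact div_nonneg h0 (Nat.cast_nonneg n)
  · rcases Nat.eq_zero_or_pos n with h | h
    · simp [birkA, h]
    · have hnR : (0:ℝ) < n := by exact_mod_cast h
      rw [birkA, div_le_one hnR]; exact h1

lemma birkA_measurable (hT : Measurable T) (hS : MeasurableSet S) (n : ℕ) :
    Measurable (birkA T S n) := by
  exact (Finset.measurable_sum _ fun i _ =>
    (measurable_const.indicator hS).comp (hT.iterate i)).div_const _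

lemma birkA_diff (T : X → X) (S : Set X) (x : X) {n : ℕ} (hn : 1 ≤ n) :
    |birkA T S n (T x) - birkA T S n x| ≤ 2 / n := by
  set f := S.indicator (fun _ => (1:ℝ)) with hf
  have key : ∑ i ∈ Finset.range n, f (T^[i] (T x))
      = ∑ i ∈ Finset.range n, f (T^[i] x) + (f (T^[n] x) - f x) := by
    have h1 : ∀ i, f (T^[i] (T x)) = f (T^[i+1] x) := by
      intro i; rw [← Function.iterate_succ_apply]
    calc ∑ i ∈ Finset.range n, f (T^[i] (T x)) = ∑ i ∈ Finset.range n, f (T^[i+1] x) := by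
          exact Finset.sum_congr rfl fun i _ => h1 i
      _ = (∑ i ∈ Finset.range (n+1), f (T^[i] x)) - f (T^[0] x) := by
          rw [Finset.sum_range_succ' (fun i => f (T^[i] x)) n]; ring
      _ = ∑ i ∈ Finset.range n, f (T^[i] x) + (f (T^[n] x) - f x) := by
          rw [Finset.sum_range_succ]; simp; ring
  have hnR : (0:ℝ) < n := by exact_mod_cast hn
  have heq : birkA T S n (T x) - birkA T S n x = (f (T^[n] x) - f x) / n := by
    rw [birkA, birkA, ← hf, key]; ring
  rw [heq, abs_div, abs_of_nonneg (le_of_lt hnR)]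
  have h1 := indicator_mem S (T^[n] x)
  have h2 := indicator_mem S x
  gcongr
  rw [abs_le]
  constructor <;> [linarith [h1.1, h2.2]; linarith [h1.2, h2.1]]

lemma limsup_le_close {u v : ℕ → ℝ} (hu : ∀ n, u n ∈ Set.Icc (0:ℝ) 1)
    (hv : ∀ n, v n ∈ Set.Icc (0:ℝ) 1) (h : ∀ n : ℕ, 1 ≤ n → |u n - v n| ≤ 2 / n) :
    limsup u atTop ≤ limsup v atTop := by
  have hbv : IsBoundedUnder (· ≤ ·) atTop v := isBoundedUnder_of ⟨1, fun n => (hv n).2⟩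
  have hcu : IsCoboundedUnder (· ≤ ·) atTop u :=
    (isBoundedUnder_of ⟨0, fun n => (hu n).1⟩ :
      IsBoundedUnder (· ≥ ·) atTop u).isCoboundedUnder_le
  have hcv : IsCoboundedUnder (· ≤ ·) atTop v :=
    (isBoundedUnder_of ⟨0, fun n => (hv n).1⟩ :
      IsBoundedUnder (· ≥ ·) atTop v).isCoboundedUnder_le
  refine le_of_forall_pos_le_add ?_
  intro ε hε
  have hev : ∀ᶠ n in atTop, u n ≤ v n + ε := by
    have h2 : Tendsto (fun n : ℕ => 2 / (n:ℝ)) atTop (𝓝 0) :=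
      tendsto_const_div_atTop_nhds_zero_nat 2
    filter_upwards [h2.eventually (gt_mem_nhds hε), eventually_ge_atTop 1] with n h2n h1n
    have h3 := abs_le.1 (h n h1n)
    linarith [h3.1, h3.2]
  have hb' : IsBoundedUnder (· ≤ ·) atTop (fun n => v n + ε) :=
    isBoundedUnder_of ⟨1 + ε, fun n => by linarith [(hv n).2]⟩
  calc limsup u atTop ≤ limsup (fun n => v n + ε) atTop := limsup_le_limsup hev hcu hb'
    _ = limsup v atTop + ε := limsup_add_const atTop v ε hbv hcv

lemma limsup_eq_close {u v : ℕ → ℝ} (hu : ∀ n, u n ∈ Set.Icc (0:ℝ) 1)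
    (hv : ∀ n, v n ∈ Set.Icc (0:ℝ) 1) (h : ∀ n : ℕ, 1 ≤ n → |u n - v n| ≤ 2 / n) :
    limsup u atTop = limsup v atTop :=
  le_antisymm (limsup_le_close hu hv h)
    (limsup_le_close hv hu (fun n hn => by rw [abs_sub_comm]; exact h n hn))

lemma birkhoff_half [IsProbabilityMeasure μ] (hT : Ergodic T μ) (hS : MeasurableSet S) :
    ∃ c : ℝ, c ≤ (μ S).toReal ∧
      ∀ᵐ x ∂μ, ∀ ε : ℝ, 0 < ε → ∀ᶠ n in atTop, birkA T S n x < c + ε := by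
  have hTm : Measurable T := hT.toMeasurePreserving.measurable
  set F : X → ℝ := fun x => limsup (fun n => birkA T S n x) atTop with hFdef
  have hFm : Measurable F := Measurable.limsup (birkA_measurable hTm hS)
  have hinv : F ∘ T = F := by
    funext z
    exact limsup_eq_close (fun n => birkA_mem T S n (T z)) (fun n => birkA_mem T S n z)
      (fun n hn => birkA_diff T S z hn)
  obtain ⟨c, hc⟩ := hT.ae_eq_const_of_ae_eq_comp₀ hFm.nullMeasurable
    (by rw [hinv])
  have hcbd : ∀ x, F x = c → 0 ≤ c ∧ c ≤ 1 := by
    intro x hx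
    have hb : IsBoundedUnder (· ≤ ·) atTop (fun n => birkA T S n x) :=
      isBoundedUnder_of ⟨1, fun n => (birkA_mem T S n x).2⟩
    have hcb : IsCoboundedUnder (· ≤ ·) atTop (fun n => birkA T S n x) :=
      (isBoundedUnder_of ⟨0, fun n => (birkA_mem T S n x).1⟩ :
        IsBoundedUnder (· ≥ ·) atTop _).isCoboundedUnder_le
    constructor
    · rw [← hx]
      exact le_limsup_of_frequently_le (Frequently.of_forall fun n => (birkA_mem T S n x).1) hb
    · rw [← hx]
      exact limsup_le_of_le hcb (Eventually.of_forall fun n => (birkA_mem T S n x).2)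
  obtain ⟨x₀, hx₀⟩ : ∃ x, F x = c := hc.exists
  obtain ⟨hc0, hc1⟩ := hcbd x₀ hx₀
  refine ⟨c, ?_, ?_⟩
  · -- Katznelson–Weiss argument : c ≤ (μ S).toReal
    refine le_of_forall_pos_le_add ?_
    intro ε hε
    have hδ : 0 < ε / 2 := by linarith
    set δ := ε / 2 with hδdef
    set B : ℕ → Set X := fun M => {z | ∀ n, 1 ≤ n → n ≤ M → birkA T S n z < c - δ} with hBdef
    have hBm : ∀ M, MeasurableSet (B M) := by
      intro M
      have : B M = ⋂ (n : ℕ), ⋂ (_ : 1 ≤ n) , ⋂ (_ : n ≤ M), {z | birkA T S n z < c - δ} := by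
        ext z; simp [hBdef, Set.mem_iInter]
      rw [this]
      exact MeasurableSet.iInter fun n => MeasurableSet.iInter fun _ =>
        MeasurableSet.iInter fun _ =>
          measurableSet_lt (birkA_measurable hTm hS n) measurable_const
    have hBanti : Antitone B := by
      intro M M' hMM' z hz n h1 h2
      exact hz n h1 (h2.trans hMM')
    have hB0 : μ (⋂ M, B M) = 0 := by
      rw [measure_eq_zero_iff_ae_notMem]
      filter_upwards [hc] with x hx
      intro hmem
      have hxc : limsup (fun n => birkA T S n x) atTop = c := hx
      have hfreq : ∃ᶠ n in atTop, c - δ < birkA T S n x := by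
        refine frequently_lt_of_lt_limsup ?_ (by rw [hxc]; linarith)
        exact (isBoundedUnder_of ⟨0, fun n => (birkA_mem T S n x).1⟩ :
          IsBoundedUnder (· ≥ ·) atTop _).isCoboundedUnder_le
      obtain ⟨n, hn1, hgt⟩ := (((eventually_ge_atTop 1).and_frequently hfreq).exists)
      simp only [Set.mem_iInter] at hmem
      exact absurd (hmem n n hn1 le_rfl) (not_lt.2 hgt.le)
    have hlimB : Tendsto (fun M => μ (B M)) atTop (𝓝 0) := by
      have := tendsto_measure_iInter_atTop (μ := μ)
        (fun M => (hBm M).nullMeasurableSet) hBanti ⟨0, measure_ne_top μ _⟩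
      rw [hB0] at this
      exact this
    obtain ⟨M, hM1, hMε⟩ : ∃ M : ℕ, 1 ≤ M ∧ μ (B M) < ENNReal.ofReal δ := by
      have hpos : (0:ℝ≥0∞) < ENNReal.ofReal δ := ENNReal.ofReal_pos.2 hδ
      exact ((eventually_ge_atTop 1).and (hlimB.eventually (gt_mem_nhds hpos))).exists
    set U := S ∪ B M with hUdef
    have hUm : MeasurableSet U := hS.union (hBm M)
    set g : X → ℝ := U.indicator (fun _ => 1) with hgdef
    have hgm : Measurable g := measurable_const.indicator hUm
    have hg0 : ∀ z, 0 ≤ g z := fun z => (indicator_mem U z).1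
    have hg1 : ∀ z, g z ≤ 1 := fun z => (indicator_mem U z).2
    have hfg : ∀ z, S.indicator (fun _ => (1:ℝ)) z ≤ g z := by
      intro z
      exact Set.indicator_le_indicator_of_subset Set.subset_union_left (fun _ => zero_le_one) z
    -- selection of a good block length
    have sel : ∀ z, ∃ k, 1 ≤ k ∧ k ≤ M ∧
        (c - δ) * k ≤ ∑ i ∈ Finset.range k, g (T^[i] z) := by
      intro z
      by_cases hz : ∃ n, 1 ≤ n ∧ n ≤ M ∧ c - δ ≤ birkA T S n z
      · obtain ⟨n, h1, h2, h3⟩ := hz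
        refine ⟨n, h1, h2, ?_⟩
        have hnR : (0:ℝ) < n := by exact_mod_cast h1
        have h4 : (c - δ) * n ≤ ∑ i ∈ Finset.range n, S.indicator (fun _ => (1:ℝ)) (T^[i] z) := by
          rw [birkA, le_div_iff₀ hnR] at h3
          exact h3
        exact h4.trans (Finset.sum_le_sum fun i _ => hfg _)
      · push_neg at hz
        refine ⟨1, le_rfl, hM1, ?_⟩
        have hzB : z ∈ B M := by
          intro n h1 h2
          exact hz n h1 h2
        have : g z = 1 := by
          rw [hgdef]
          exact Set.indicator_of_mem (Set.mem_union_right _ hzB) _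
        rw [Finset.sum_range_one, Function.iterate_zero_apply, this]
        push_cast
        nlinarith
    -- key inductive estimate
    have key : ∀ N : ℕ, ∀ z, (c - δ) * N - M ≤ ∑ i ∈ Finset.range N, g (T^[i] z) := by
      intro N
      induction N using Nat.strong_induction_on with
      | _ N ih =>
        intro z
        by_cases hNM : N ≤ M
        · have h1 : (0:ℝ) ≤ ∑ i ∈ Finset.range N, g (T^[i] z) :=
            Finset.sum_nonneg fun i _ => hg0 _
          have h2 : (c - δ) * N ≤ N := by nlinarith [Nat.cast_nonneg (α := ℝ) N]
          have h3 : (N:ℝ) ≤ M := by exact_mod_cast hNM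
          linarith
        · push_neg at hNM
          obtain ⟨k, hk1, hkM, hkg⟩ := sel z
          have hkN : k ≤ N := hkM.trans hNM.le
          have split : ∑ i ∈ Finset.range N, g (T^[i] z)
              = ∑ i ∈ Finset.range k, g (T^[i] z)
                + ∑ i ∈ Finset.range (N - k), g (T^[i] (T^[k] z)) := by
            have hNk : N = k + (N - k) := by omega
            nth_rewrite 1 [hNk]
            rw [Finset.sum_range_add]
            congr 1
            refine Finset.sum_congr rfl fun i _ => ?_
            rw [Nat.add_comm k i, Function.iterate_add_apply]
          have ihh := ih (N - k) (by omega) (T^[k] z)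
          have cast1 : ((N - k : ℕ) : ℝ) = (N:ℝ) - k := by
            rw [Nat.cast_sub hkN]
          rw [cast1] at ihh
          rw [split]
          nlinarith
    -- integrate the inequality
    set t := μ U with htdef
    have hint : ∀ N : ℕ, ENNReal.ofReal ((c - δ) * N - M) ≤ N * t := by
      intro N
      have pt : ∀ z, ENNReal.ofReal ((c - δ) * N - M)
          ≤ ∑ i ∈ Finset.range N, ENNReal.ofReal (g (T^[i] z)) := by
        intro z
        rw [← ENNReal.ofReal_sum_of_nonneg (fun i _ => hg0 _)]
        exact ENNReal.ofReal_le_ofReal (key N z)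
      have hlg : ∫⁻ z, ENNReal.ofReal (g z) ∂μ = t := by
        have : ∀ z, ENNReal.ofReal (g z) = U.indicator (1 : X → ℝ≥0∞) z := by
          intro z
          by_cases hz : z ∈ U <;>
            simp [hgdef, Set.indicator_of_mem, Set.indicator_of_notMem, hz]
        simp_rw [this]
        rw [lintegral_indicator_one hUm]
      calc ENNReal.ofReal ((c - δ) * N - M)
          = ∫⁻ _, ENNReal.ofReal ((c - δ) * N - M) ∂μ := by
            rw [lintegral_const, measure_univ, mul_one]
        _ ≤ ∫⁻ z, ∑ i ∈ Finset.range N, ENNReal.ofReal (g (T^[i] z)) ∂μ := lintegral_mono pt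
        _ = ∑ i ∈ Finset.range N, ∫⁻ z, ENNReal.ofReal (g (T^[i] z)) ∂μ :=
            lintegral_finset_sum _ fun i _ =>
              (ENNReal.measurable_ofReal.comp (hgm.comp (hTm.iterate i)))
        _ = ∑ i ∈ Finset.range N, t := by
            refine Finset.sum_congr rfl fun i _ => ?_
            rw [← hlg]
            exact (hT.toMeasurePreserving.iterate i).lintegral_comp
              (ENNReal.measurable_ofReal.comp hgm)
        _ = N * t := by simp [Finset.sum_const, nsmul_eq_mul]
    have htfin : t ≠ ⊤ := measure_ne_top μ _
    have treal : ∀ N : ℕ, 1 ≤ N → (c - δ) - M / N ≤ t.toReal := by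
      intro N hN
      have hNR : (0:ℝ) < N := by exact_mod_cast hN
      by_cases hcase : (c - δ) * N - M ≤ 0
      · have : (c - δ) - M / N ≤ 0 := by
          rw [sub_nonpos]
          rw [sub_nonpos] at hcase
          rw [le_div_iff₀ hNR]
          linarith [hcase]
        exact this.trans ENNReal.toReal_nonneg
      · push_neg at hcase
        have h1 := hint N
        have hNtop : ((N : ℝ≥0∞) * t) ≠ ⊤ := ENNReal.mul_ne_top (ENNReal.natCast_ne_top N) htfin
        have h2 : ((c - δ) * N - M) ≤ ((N : ℝ≥0∞) * t).toReal :=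
          (ENNReal.ofReal_le_iff_le_toReal hNtop).1 h1
        have h3 : ((N : ℝ≥0∞) * t).toReal = N * t.toReal := by
          rw [ENNReal.toReal_mul, ENNReal.toReal_natCast]
        rw [h3] at h2
        have hid : (c - δ) - M / N = ((c - δ) * N - M) / N := by field_simp
        rw [hid, div_le_iff₀ hNR]
        nlinarith
    have hfinal : c - δ ≤ t.toReal := by
      have hT1 : Tendsto (fun N : ℕ => (c - δ) - M / N) atTop (𝓝 (c - δ)) := by
        have := tendsto_const_div_atTop_nhds_zero_nat (M : ℝ)
        simpa using tendsto_const_nhds.sub this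
      exact le_of_tendsto hT1 ((eventually_ge_atTop 1).mono treal)
    have htle : t.toReal ≤ (μ S).toReal + δ := by
      have h1 : t ≤ μ S + μ (B M) := measure_union_le _ _
      have h2 : t.toReal ≤ (μ S + μ (B M)).toReal :=
        ENNReal.toReal_mono (by finiteness) h1
      rw [ENNReal.toReal_add (measure_ne_top μ _) (measure_ne_top μ _)] at h2
      have h3 : (μ (B M)).toReal ≤ δ :=
        ENNReal.toReal_le_of_le_ofReal hδ.le hMε.le
      linarith
    have : c ≤ (μ S).toReal + ε := by
      rw [hδdef] at hfinal htle
      linarith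
    exact this
  · filter_upwards [hc] with x hx ε hε
    have hlt : limsup (fun n => birkA T S n x) atTop < c + ε := by
      have h' : limsup (fun n => birkA T S n x) atTop = c := hx
      rw [h']; linarith
    exact eventually_lt_of_limsup_lt hlt
      (isBoundedUnder_of ⟨1, fun n => (birkA_mem T S n x).2⟩)

lemma birkhoff_indicator [IsProbabilityMeasure μ] (hT : Ergodic T μ) (hS : MeasurableSet S) :
    ∀ᵐ x ∂μ, Tendsto (fun n => birkA T S n x) atTop (𝓝 (μ S).toReal) := by
  obtain ⟨c, hcle, hcae⟩ := birkhoff_half hT hS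
  obtain ⟨c', hcle', hcae'⟩ := birkhoff_half hT hS.compl
  have hμc : (μ Sᶜ).toReal = 1 - (μ S).toReal := by
    rw [prob_compl_eq_one_sub hS, ENNReal.toReal_sub_of_le prob_le_one ENNReal.one_ne_top]
    simp
  filter_upwards [hcae, hcae'] with x h1 h2
  rw [Metric.tendsto_nhds]
  intro ε hε
  have hsum : ∀ n : ℕ, 1 ≤ n → birkA T S n x + birkA T Sᶜ n x = 1 := by
    intro n hn
    have hpt : ∀ z, S.indicator (fun _ => (1:ℝ)) z + Sᶜ.indicator (fun _ => (1:ℝ)) z = 1 := by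
      intro z; by_cases hz : z ∈ S <;> simp [Set.indicator_apply, hz]
    have hnR : (0:ℝ) < n := by exact_mod_cast hn
    rw [birkA, birkA, ← add_div, ← Finset.sum_add_distrib]
    simp_rw [hpt]
    rw [Finset.sum_const, Finset.card_range, nsmul_eq_mul, mul_one]
    field_simp
  filter_upwards [h1 (ε/2) (by linarith), h2 (ε/2) (by linarith), eventually_ge_atTop 1]
    with n e1 e2 en
  rw [Real.dist_eq, abs_lt]
  have hs := hsum n en
  constructor <;> nlinarith

end Birkhoff

-- measurability infrastructure
lemma measurableSet_none {A : Type*} [MeasurableSpace A] :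
    MeasurableSet ({none} : Set (Option A)) := by
  refine ⟨Set.range Sum.inr, measurableSet_range_inr, ?_⟩
  ext o
  cases o <;> simp [Option.elim']

lemma measurable_shift_s6 {B : Type*} [MeasurableSpace B] :
    Measurable (shift : (ℤ → B) → (ℤ → B)) :=
  measurable_pi_lambda _ (fun i => measurable_pi_apply (i + 1))

lemma cyl_none_eq {A : Type*} :
    cyl [(none : Option A)] = (fun z : ℤ → Option A => z 0) ⁻¹' {none} := by
  ext z
  constructor
  · intro h
    exact h ⟨0, by simp⟩
  · intro h i
    have h0 : (i : ℕ) = 0 := Nat.lt_one_iff.mp (by simpa using i.isLt)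
    simpa [h0] using h

lemma measurableSet_cyl_none {A : Type*} [MeasurableSpace A] :
    MeasurableSet (cyl [(none : Option A)]) := by
  rw [cyl_none_eq]
  exact measurable_pi_apply 0 measurableSet_none

lemma mem_cyl_none_iff {A : Type*} (z : ℤ → Option A) :
    z ∈ cyl [(none : Option A)] ↔ z 0 = none := by
  rw [cyl_none_eq]; rfl

lemma wordOf_succ {B : Type*} (z : ℤ → B) (n : ℕ) :
    wordOf z (n + 1) = wordOf z n ++ [z n] := by
  simp [wordOf, List.range_succ]

lemma wordOf_length {B : Type*} (z : ℤ → B) (n : ℕ) : (wordOf z n).length = n := by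
  induction n with
  | zero => rfl
  | succ n ih => rw [wordOf_succ, List.length_append, ih]; rfl

lemma shift_iter {B : Type*} (i : ℕ) (z : ℤ → B) (j : ℤ) :
    shift^[i] z j = z (j + i) := by
  induction i generalizing z j with
  | zero => simp
  | succ i ih =>
      rw [Function.iterate_succ_apply, ih]
      show z (j + i + 1) = _
      congr 1
      push_cast
      ring

lemma wordOf_count {A : Type*} [DecidableEq A] (z : ℤ → Option A) (n : ℕ) :
    (((wordOf z n).count none : ℕ) : ℝ)
      = ∑ i ∈ Finset.range n, (cyl [(none : Option A)]).indicator (fun _ => (1:ℝ)) (shift^[i] z) := by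
  induction n with
  | zero => simp [wordOf]
  | succ n ih =>
      rw [wordOf_succ, List.count_append, Finset.sum_range_succ, Nat.cast_add, ih]
      congr 1
      have hmem : shift^[n] z ∈ cyl [(none : Option A)] ↔ z n = none := by
        rw [mem_cyl_none_iff, shift_iter]
        simp
      by_cases h : z (n : ℤ) = none
      · rw [Set.indicator_of_mem (hmem.2 h)]
        simp only [List.count_cons, List.count_nil]
        simp [h]
      · rw [Set.indicator_of_notMem (fun hc => h (hmem.1 hc))]
        simp only [List.count_cons, List.count_nil]
        simp [h]

/-- for every ergodic `ν`, `ν`-a.e. `|S(z₁…zₙ)|/n → 1 + ν(α)` (the mean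
lengthening `W_α^ν`); moreover `W_α^{𝒢μ} = Z_{xy}^μ`, i.e. `1 + 𝒢μ(α) = Z_{xy}^μ`. -/
theorem stmt_6 {A : Type*} [Fintype A] [DecidableEq A] [MeasurableSpace A]
    [MeasurableSingletonClass A] (x y : A) :
    (∀ ν : Measure (ℤ → Option A), IsProbabilityMeasure ν → Ergodic shift ν →
      ∀ᵐ z ∂ν, Tendsto
        (fun n : ℕ => ((pairExpand x y (wordOf z n)).length : ℝ) / (n : ℝ))
        atTop (𝓝 (1 + (ν (cyl [(none : Option A)])).toReal))) ∧
    (∀ μ : Measure (ℤ → A), IsProbabilityMeasure μ → Ergodic shift μ →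
      ∀ ν : Measure (ℤ → Option A), IsProbabilityMeasure ν → Ergodic shift ν →
      (∀ s : List (Option A), s ≠ [] →
        ∀ᵐ w ∂μ, Tendsto
          (fun n : ℕ =>
            (occ s (pairSubst x y (wordOf w n)) : ℝ) /
              ((pairSubst x y (wordOf w n)).length : ℝ))
          atTop (𝓝 ((ν (cyl s)).toReal))) →
      ∀ Z : ℝ,
        (∀ᵐ w ∂μ, Tendsto
          (fun n : ℕ => (n : ℝ) / ((pairSubst x y (wordOf w n)).length : ℝ))
          atTop (𝓝 Z)) →
        1 + (ν (cyl [(none : Option A)])).toReal = Z) := by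
  constructor
  · -- Part 1: mean lengthening
    intro ν hνp hνe
    haveI := hνp
    have hb := birkhoff_indicator hνe (measurableSet_cyl_none (A := A))
    filter_upwards [hb] with z hz
    have h1 : Tendsto (fun n : ℕ => 1 + birkA shift (cyl [(none : Option A)]) n z) atTop
        (𝓝 (1 + (ν (cyl [(none : Option A)])).toReal)) := tendsto_const_nhds.add hz
    refine Tendsto.congr' ?_ h1
    filter_upwards [eventually_ge_atTop 1] with n hn
    have hnR : (0:ℝ) < n := by exact_mod_cast hn
    rw [birkA, ← wordOf_count, pairExpand_length, wordOf_length]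
    push_cast
    field_simp
  · -- Part 2: W = Z
    intro μ hμp hμe ν hνp hνe hfreq Z hZ
    haveI := hμp
    haveI : (MeasureTheory.ae μ).NeBot := ae_neBot.2 (IsProbabilityMeasure.ne_zero μ)
    obtain ⟨w, h1, h2⟩ := ((hfreq [none] (List.cons_ne_nil _ _)).and hZ).exists
    set L : ℕ → ℕ := fun n => (pairSubst x y (wordOf w n)).length with hL
    have key : (fun n : ℕ => (n : ℝ) / (L n : ℝ)) =ᶠ[atTop]
        (fun n : ℕ => 1 + (occ [none] (pairSubst x y (wordOf w n)) : ℝ) / (L n : ℝ)) := by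
      filter_upwards [eventually_ge_atTop 1] with n hn
      have hnil : wordOf w n ≠ [] := by
        intro hc
        have h := wordOf_length w n
        rw [hc] at h
        simp at h
        omega
      have hLpos : 0 < L n := List.length_pos_iff.2 (pairSubst_ne_nil x y _ hnil)
      have hLR : (0:ℝ) < L n := by exact_mod_cast hLpos
      have hsum : L n + (pairSubst x y (wordOf w n)).count none = n := by
        rw [hL]
        rw [pairSubst_length, wordOf_length]
      rw [occ_singleton]
      have hcast : (n:ℝ) = L n + ((pairSubst x y (wordOf w n)).count none : ℝ) := by
        exact_mod_cast hsum.symm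
      rw [hcast]
      field_simp
      exact congrArg (fun t : ℕ => (L n : ℝ) + (t : ℝ)) (count_beq_eq none _)
    have h3 : Tendsto (fun n : ℕ => (n : ℝ) / (L n : ℝ)) atTop
        (𝓝 (1 + (ν (cyl [(none : Option A)])).toReal)) :=
      (tendsto_const_nhds.add h1).congr' key.symm
    exact tendsto_nhds_unique h3 h2
end
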